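/- Let Ω ⊂ ℝ³ have finite positive measure and split into measurable A, B with |A| = |B| = |Ω|/2. Let (ρ¹,ρ̃¹) and (ρ²,ρ̃²) be the constant states from the pointwise non-monotonicity example (Section 5.1), and define density fields by taking state 1 on A, state 2 on B (field P) and swapped (field Q). Then ∫_Ω P ρ = ∫_Ω Q ρ and ∫_Ω P ρ̃ = ∫_Ω Q ρ̃ (mass conservation), while ∫_Ω (p(P) − p(Q))(ρ̃_P − ρ̃_Q) < 0, where p(ρ,ρ̃) = ρ^(γ−1)·ρ̃. -/

import Mathlib

open MeasureTheory

private theorem core_ineq (γ M1 M2 ε ρt2 : ℝ) (hγ : 1 < γ) (hM2 : 0 < M2) (hM : M2 < M1)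
    (hε : ε = (Real.sqrt (M1 * M2) / 3) * (M1 - M2) / (M1 + M2))
    (hρt2 : ρt2 = (M1 / M2) ^ ((γ - 1) / (2 * γ))) :
    ((M2 + ε) * ρt2) ^ (γ - 1) * ρt2 < (M1 - ε) ^ (γ - 1) ∧ 1 < ρt2 := by
  have hM1 : 0 < M1 := hM2.trans hM
  set a := Real.sqrt M1 with ha
  set b := Real.sqrt M2 with hb
  have ha2 : a ^ 2 = M1 := Real.sq_sqrt hM1.le
  have hb2 : b ^ 2 = M2 := Real.sq_sqrt hM2.le
  have hapos : 0 < a := Real.sqrt_pos.mpr hM1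
  have hbpos : 0 < b := Real.sqrt_pos.mpr hM2
  have hba : b < a := Real.sqrt_lt_sqrt hM2.le hM
  have hsab : Real.sqrt (M1 * M2) = a * b := Real.sqrt_mul hM1.le M2
  have hεeq : ε = (a * b / 3) * (a ^ 2 - b ^ 2) / (a ^ 2 + b ^ 2) := by
    rw [hε, hsab, ha2, hb2]
  have habpos : (0:ℝ) < a ^ 2 + b ^ 2 := by positivity
  have hε' : ε * (a ^ 2 + b ^ 2) = a * b * (a ^ 2 - b ^ 2) / 3 := by
    rw [hεeq]; field_simp
  have hεpos : 0 < ε := by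
    rw [hεeq]
    have : 0 < a ^ 2 - b ^ 2 := by nlinarith
    positivity
  have key3 : ((a ^ 2 - ε) * b - (b ^ 2 + ε) * a) * (3 * (a ^ 2 + b ^ 2))
      = a * b * (a - b) * (2 * a ^ 2 - 2 * a * b + 2 * b ^ 2) := by
    linear_combination (-3 * (a + b)) * hε'
  have hdpos : 0 < a * b * (a - b) * (2 * a ^ 2 - 2 * a * b + 2 * b ^ 2) := by
    have h1 : 0 < a - b := by linarith
    have h2 : 0 < 2 * a ^ 2 - 2 * a * b + 2 * b ^ 2 := by nlinarith [sq_nonneg (a - b)]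
    positivity
  have hX : 0 < (a ^ 2 - ε) * b - (b ^ 2 + ε) * a := by
    nlinarith [key3, hdpos, habpos]
  have hkey : (M2 + ε) * (a / b) < M1 - ε := by
    rw [← mul_div_assoc, div_lt_iff₀ hbpos, ← ha2, ← hb2]
    nlinarith [hX]
  have hab : 0 < M1 / M2 := div_pos hM1 hM2
  have h1ab : 1 < M1 / M2 := (one_lt_div hM2).mpr hM
  have hexp : 0 < (γ - 1) / (2 * γ) := by
    apply div_pos <;> linarith
  have hρt2pos : 0 < ρt2 := by rw [hρt2]; positivity
  have hρt2gt1 : 1 < ρt2 := by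
    rw [hρt2]; exact (Real.one_lt_rpow_iff_of_pos hab).mpr (Or.inl ⟨h1ab, hexp⟩)
  refine ⟨?_, hρt2gt1⟩
  have hγ0 : γ ≠ 0 := by linarith
  have hsqrtdiv : (M1 / M2) ^ ((1:ℝ)/2) = a / b := by
    rw [← Real.sqrt_eq_rpow, Real.sqrt_div hM1.le]
  have hM2ε : (0:ℝ) ≤ M2 + ε := by linarith
  have hLHS : ((M2 + ε) * ρt2) ^ (γ - 1) * ρt2 = ((M2 + ε) * (a / b)) ^ (γ - 1) := by
    rw [Real.mul_rpow hM2ε hρt2pos.le, mul_assoc,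
      Real.mul_rpow hM2ε (by positivity : (0:ℝ) ≤ a / b)]
    congr 1
    rw [hρt2, ← Real.rpow_mul hab.le, ← Real.rpow_add hab, ← hsqrtdiv,
      ← Real.rpow_mul hab.le]
    congr 1
    field_simp
    ring
  rw [hLHS]
  exact Real.rpow_lt_rpow (by positivity) hkey (by linarith)

private theorem int_two_piece {A B : Set (Fin 3 → ℝ)} (hA : MeasurableSet A)
    (hB : MeasurableSet B) (hd : Disjoint A B) (hAf : volume A ≠ ⊤) (hBf : volume B ≠ ⊤)
    (f : (Fin 3 → ℝ) → ℝ) (c d : ℝ) (hfA : Set.EqOn f (fun _ => c) A)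
    (hfB : Set.EqOn f (fun _ => d) B) :
    ∫ x in A ∪ B, f x = (volume A).toReal * c + (volume B).toReal * d := by
  have hiA : IntegrableOn f A := (integrableOn_congr_fun hfA hA).mpr
    (integrableOn_const hAf)
  have hiB : IntegrableOn f B := (integrableOn_congr_fun hfB hB).mpr
    (integrableOn_const hBf)
  rw [setIntegral_union hd hB hiA hiB, setIntegral_congr_fun hA hfA, setIntegral_congr_fun hB hfB,
    setIntegral_const, setIntegral_const]
  simp [smul_eq_mul, Measure.real]

theorem stmt_18 (γ M1 M2 : ℝ) (hγ : 1 < γ) (hM2 : 0 < M2) (hM : M2 < M1)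
    (Ω A B : Set (Fin 3 → ℝ)) (hA : MeasurableSet A) (hB : MeasurableSet B)
    (hdisj : Disjoint A B) (hunion : A ∪ B = Ω)
    (hfin : volume Ω < ⊤) (hpos : 0 < volume Ω)
    (hvolA : volume A = volume Ω / 2) (hvolB : volume B = volume Ω / 2)
    (ε ρt1 ρt2 ρ1 ρ2 : ℝ)
    (hε : ε = (Real.sqrt (M1 * M2) / 3) * (M1 - M2) / (M1 + M2))
    (hρt1 : ρt1 = 1) (hρt2 : ρt2 = (M1 / M2) ^ ((γ - 1) / (2 * γ)))
    (hρ1 : ρ1 = M1 - ε) (hρ2 : ρ2 = (M2 + ε) * ρt2)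
    (p : ℝ → ℝ → ℝ) (hp : ∀ r rt, p r rt = r ^ (γ - 1) * rt)
    (ρP ρtP ρQ ρtQ : (Fin 3 → ℝ) → ℝ)
    (hρP : ∀ x, ρP x = A.indicator (fun _ => ρ1) x + B.indicator (fun _ => ρ2) x)
    (hρtP : ∀ x, ρtP x = A.indicator (fun _ => ρt1) x + B.indicator (fun _ => ρt2) x)
    (hρQ : ∀ x, ρQ x = A.indicator (fun _ => ρ2) x + B.indicator (fun _ => ρ1) x)
    (hρtQ : ∀ x, ρtQ x = A.indicator (fun _ => ρt2) x + B.indicator (fun _ => ρt1) x) :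
    (∫ x in Ω, ρP x = ∫ x in Ω, ρQ x) ∧
    (∫ x in Ω, ρtP x = ∫ x in Ω, ρtQ x) ∧
    (∫ x in Ω, (p (ρP x) (ρtP x) - p (ρQ x) (ρtQ x)) * (ρtP x - ρtQ x)) < 0 := by
  subst hunion
  -- measure facts
  have hAfin : volume A ≠ ⊤ := by
    rw [hvolA]; exact (ENNReal.div_lt_top hfin.ne two_ne_zero).ne
  have hBfin : volume B ≠ ⊤ := by
    rw [hvolB]; exact (ENNReal.div_lt_top hfin.ne two_ne_zero).ne
  have hAne0 : volume A ≠ 0 := by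
    rw [hvolA]
    simp [ENNReal.div_eq_zero_iff, hpos.ne']
  have htAB : (volume A).toReal = (volume B).toReal := by rw [hvolA, hvolB]
  have htApos : 0 < (volume A).toReal := ENNReal.toReal_pos hAne0 hAfin
  -- pointwise values
  have hnotB : ∀ x ∈ A, x ∉ B := fun x hx => Set.disjoint_left.mp hdisj hx
  have hnotA : ∀ x ∈ B, x ∉ A := fun x hx => Set.disjoint_right.mp hdisj hx
  have hPA : Set.EqOn ρP (fun _ => ρ1) A := fun x hx => by
    simp [hρP x, Set.indicator_of_mem hx, Set.indicator_of_notMem (hnotB x hx)]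
  have hPB : Set.EqOn ρP (fun _ => ρ2) B := fun x hx => by
    simp [hρP x, Set.indicator_of_mem hx, Set.indicator_of_notMem (hnotA x hx)]
  have hQA : Set.EqOn ρQ (fun _ => ρ2) A := fun x hx => by
    simp [hρQ x, Set.indicator_of_mem hx, Set.indicator_of_notMem (hnotB x hx)]
  have hQB : Set.EqOn ρQ (fun _ => ρ1) B := fun x hx => by
    simp [hρQ x, Set.indicator_of_mem hx, Set.indicator_of_notMem (hnotA x hx)]
  have htPA : Set.EqOn ρtP (fun _ => ρt1) A := fun x hx => by
    simp [hρtP x, Set.indicator_of_mem hx, Set.indicator_of_notMem (hnotB x hx)]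
  have htPB : Set.EqOn ρtP (fun _ => ρt2) B := fun x hx => by
    simp [hρtP x, Set.indicator_of_mem hx, Set.indicator_of_notMem (hnotA x hx)]
  have htQA : Set.EqOn ρtQ (fun _ => ρt2) A := fun x hx => by
    simp [hρtQ x, Set.indicator_of_mem hx, Set.indicator_of_notMem (hnotB x hx)]
  have htQB : Set.EqOn ρtQ (fun _ => ρt1) B := fun x hx => by
    simp [hρtQ x, Set.indicator_of_mem hx, Set.indicator_of_notMem (hnotA x hx)]
  refine ⟨?_, ?_, ?_⟩
  · rw [int_two_piece hA hB hdisj hAfin hBfin ρP ρ1 ρ2 hPA hPB,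
      int_two_piece hA hB hdisj hAfin hBfin ρQ ρ2 ρ1 hQA hQB, htAB]
    ring
  · rw [int_two_piece hA hB hdisj hAfin hBfin ρtP ρt1 ρt2 htPA htPB,
      int_two_piece hA hB hdisj hAfin hBfin ρtQ ρt2 ρt1 htQA htQB, htAB]
    ring
  · set K : ℝ := (p ρ1 ρt1 - p ρ2 ρt2) * (ρt1 - ρt2) with hK
    have hgA : Set.EqOn (fun x => (p (ρP x) (ρtP x) - p (ρQ x) (ρtQ x)) * (ρtP x - ρtQ x))
        (fun _ => K) A := fun x hx => by
      simp only [hPA hx, hQA hx, htPA hx, htQA hx, hK]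
    have hgB : Set.EqOn (fun x => (p (ρP x) (ρtP x) - p (ρQ x) (ρtQ x)) * (ρtP x - ρtQ x))
        (fun _ => K) B := fun x hx => by
      simp only [hPB hx, hQB hx, htPB hx, htQB hx, hK]
      ring
    rw [int_two_piece hA hB hdisj hAfin hBfin _ K K hgA hgB]
    have hcore := core_ineq γ M1 M2 ε ρt2 hγ hM2 hM hε hρt2
    have hKneg : K < 0 := by
      rw [hK, hp, hp, hρt1, hρ1, hρ2]
      have h1 : 0 < (M1 - ε) ^ (γ - 1) * 1 - ((M2 + ε) * ρt2) ^ (γ - 1) * ρt2 := by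
        have := hcore.1; linarith
      have h2 : (1:ℝ) - ρt2 < 0 := by have := hcore.2; linarith
      exact mul_neg_of_pos_of_neg h1 h2
    nlinarith [htApos, htAB, hKneg]
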